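/- Let A ⊆ ℝ^d and let f : ℝ^d → ℝ^d be an invertible function that is locally L-Lipschitz on A (i.e. ‖f(x₁) − f(x₂)‖ ≤ L·‖x₁ − x₂‖ whenever f(x₁), f(x₂) ∈ A), with L > 0. Let Z′ be a random vector taking values in A almost surely with mean z = 𝔼[Z′] ∈ A, set X′ = f⁻¹(Z′) and x = f⁻¹(z), and suppose X′ is Gaussian with mean x and covariance Σ = σ²·I_d with σ > 0. Then for every ε ≥ 0, writing B^ε_z = {z′ ∈ A : ‖z′ − z‖ < ε}, one has (ε²/L²)·(1 − ℙ(Z′ ∈ B^ε_z)) ≤ (d/(2πe))·exp((2/d)·H_Σ), where H_Σ = (d/2)·(1 + log(2π)) + (1/2)·log(det Σ) is the differential entropy of N(x, Σ); equivalently, the right-hand side equals d·σ². -/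

import Mathlib

open MeasureTheory
open Real
open scoped ENNReal


lemma integrable_sq_mul_exp_neg_mul_sq {b : ℝ} (hb : 0 < b) :
    Integrable fun x : ℝ => x ^ 2 * Real.exp (-b * x ^ 2) := by
  have := integrable_rpow_mul_exp_neg_mul_sq hb (s := 2) (by norm_num)
  simpa [Real.rpow_natCast] using this

lemma integral_sq_mul_exp_neg_mul_sq {b : ℝ} (hb : 0 < b) :
    ∫ x : ℝ, x ^ 2 * Real.exp (-b * x ^ 2) = Real.sqrt (π / b) / (2 * b) := by
  have hderiv : ∀ x : ℝ, HasDerivAt (fun t : ℝ => t * Real.exp (-b * t ^ 2))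
      (Real.exp (-b * x ^ 2) - 2 * b * (x ^ 2 * Real.exp (-b * x ^ 2))) x := by
    intro x
    have h1 : HasDerivAt (fun t : ℝ => -b * t ^ 2) (-b * (2 * x)) x := by
      simpa using ((hasDerivAt_pow 2 x).const_mul (-b))
    have h2 := (h1.exp)
    have h3 : HasDerivAt (fun t : ℝ => t * Real.exp (-b * t ^ 2)) _ x := (hasDerivAt_id' x).mul h2
    convert h3 using 1
    ring
  have hint : Integrable (fun x : ℝ =>
      Real.exp (-b * x ^ 2) - 2 * b * (x ^ 2 * Real.exp (-b * x ^ 2))) :=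
    (integrable_exp_neg_mul_sq hb).sub ((integrable_sq_mul_exp_neg_mul_sq hb).const_mul _)
  have hzero := integral_eq_zero_of_hasDerivAt_of_integrable hderiv hint
    (integrable_mul_exp_neg_mul_sq hb)
  rw [integral_sub (integrable_exp_neg_mul_sq hb)
      ((integrable_sq_mul_exp_neg_mul_sq hb).const_mul _), integral_const_mul,
      integral_gaussian] at hzero
  field_simp at hzero ⊢
  linarith

lemma pi_moment_aux {b : ℝ} (hb : 0 < b) (j : Prop) [Decidable j] :
    Integrable (fun t : ℝ => (if j then t ^ 2 else 1) * Real.exp (-b * t ^ 2)) := by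
  by_cases h : j
  · simp only [h, if_true]
    have := integrable_rpow_mul_exp_neg_mul_sq hb (s := 2) (by norm_num)
    simpa [Real.rpow_natCast] using this
  · simp only [h, if_false, one_mul]
    exact integrable_exp_neg_mul_sq hb

lemma pi_moment (d : ℕ) {b : ℝ} (hb : 0 < b) :
    ∫ w : Fin d → ℝ, (∑ i, (w i) ^ 2) * ∏ j, Real.exp (-b * (w j) ^ 2)
      = d * (Real.sqrt (π / b) ^ d / (2 * b)) := by
  have hint1 : ∀ i : Fin d, Integrable (fun w : Fin d → ℝ =>
      ∏ j, ((if j = i then (w j) ^ 2 else 1) * Real.exp (-b * (w j) ^ 2))) := by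
    intro i
    exact Integrable.fintype_prod
      (f := fun j t => (if j = i then t ^ 2 else 1) * Real.exp (-b * t ^ 2))
      (fun j => pi_moment_aux hb _)
  have key : ∀ (w : Fin d → ℝ) (i : Fin d),
      (w i) ^ 2 * ∏ j, Real.exp (-b * (w j) ^ 2)
        = ∏ j, ((if j = i then (w j) ^ 2 else 1) * Real.exp (-b * (w j) ^ 2)) := by
    intro w i
    rw [Finset.prod_mul_distrib, Finset.prod_ite_eq' Finset.univ i (fun j => (w j) ^ 2)]
    simp
  calc ∫ w : Fin d → ℝ, (∑ i, (w i) ^ 2) * ∏ j, Real.exp (-b * (w j) ^ 2)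
      = ∫ w : Fin d → ℝ, ∑ i, ((w i) ^ 2 * ∏ j, Real.exp (-b * (w j) ^ 2)) := by
        simp_rw [Finset.sum_mul]
    _ = ∑ i, ∫ w : Fin d → ℝ, (w i) ^ 2 * ∏ j, Real.exp (-b * (w j) ^ 2) := by
        refine integral_finset_sum _ (fun i _ => ?_)
        simp_rw [key _ i]
        exact hint1 i
    _ = ∑ i : Fin d, (Real.sqrt (π / b) ^ d / (2 * b)) := by
        refine Finset.sum_congr rfl (fun i _ => ?_)
        simp_rw [key _ i]
        rw [integral_fintype_prod_volume_eq_prod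
          (f := fun j t => (if j = i then t ^ 2 else 1) * Real.exp (-b * t ^ 2))]
        have : ∀ j : Fin d, (∫ t : ℝ, (if j = i then t ^ 2 else 1) * Real.exp (-b * t ^ 2))
            = (if j = i then (1 / (2 * b)) else 1) * Real.sqrt (π / b) := by
          intro j
          by_cases h : j = i
          · simp only [h, if_true]
            rw [integral_sq_mul_exp_neg_mul_sq hb]; ring
          · simp only [h, if_false, one_mul]
            rw [integral_gaussian]
        simp_rw [this]
        rw [Finset.prod_mul_distrib, Finset.prod_ite_eq' Finset.univ i (fun _ => (1 : ℝ) / (2 * b))]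
        simp
        ring
    _ = d * (Real.sqrt (π / b) ^ d / (2 * b)) := by simp [mul_comm]

lemma eucl_moment (d : ℕ) {b : ℝ} (hb : 0 < b) :
    ∫ y : EuclideanSpace ℝ (Fin d), ‖y‖ ^ 2 * Real.exp (-b * ‖y‖ ^ 2)
      = d * (Real.sqrt (π / b) ^ d / (2 * b)) := by
  have MP := EuclideanSpace.volume_preserving_symm_measurableEquiv_toLp (Fin d)
  rw [← (MP.symm (MeasurableEquiv.toLp 2 (Fin d → ℝ)).symm).integral_comp
    (MeasurableEquiv.measurableEmbedding _)]
  have : ∀ w : Fin d → ℝ,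
      ‖(MeasurableEquiv.toLp 2 (Fin d → ℝ)).symm.symm w‖ ^ 2
        * Real.exp (-b * ‖(MeasurableEquiv.toLp 2 (Fin d → ℝ)).symm.symm w‖ ^ 2)
        = (∑ i, (w i) ^ 2) * ∏ j, Real.exp (-b * (w j) ^ 2) := by
    intro w
    have hn : ‖(MeasurableEquiv.toLp 2 (Fin d → ℝ)).symm.symm w‖ ^ 2 = ∑ i, (w i) ^ 2 := by
      rw [PiLp.norm_sq_eq_of_L2]
      simp
    rw [hn, ← Real.exp_sum]
    congr 2
    simp [Finset.mul_sum]
  simp_rw [this]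
  exact pi_moment d hb

lemma pi_moment_integrable (d : ℕ) {b : ℝ} (hb : 0 < b) :
    Integrable (fun w : Fin d → ℝ => (∑ i, (w i) ^ 2) * ∏ j, Real.exp (-b * (w j) ^ 2)) := by
  have : (fun w : Fin d → ℝ => (∑ i, (w i) ^ 2) * ∏ j, Real.exp (-b * (w j) ^ 2))
      = fun w : Fin d → ℝ =>
        ∑ i, ∏ j, ((if j = i then (w j) ^ 2 else 1) * Real.exp (-b * (w j) ^ 2)) := by
    funext w
    rw [Finset.sum_mul]
    refine Finset.sum_congr rfl (fun i _ => ?_)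
    rw [Finset.prod_mul_distrib, Finset.prod_ite_eq' Finset.univ i (fun j => (w j) ^ 2)]
    simp
  rw [this]
  exact integrable_finset_sum _ (fun i _ => Integrable.fintype_prod
    (f := fun j t => (if j = i then t ^ 2 else 1) * Real.exp (-b * t ^ 2))
    (fun j => pi_moment_aux hb _))

lemma eucl_moment_integrable (d : ℕ) {b : ℝ} (hb : 0 < b) :
    Integrable (fun y : EuclideanSpace ℝ (Fin d) => ‖y‖ ^ 2 * Real.exp (-b * ‖y‖ ^ 2)) := by
  have MP := EuclideanSpace.volume_preserving_symm_measurableEquiv_toLp (Fin d)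
  rw [← MeasurePreserving.integrable_comp_emb (MP.symm (MeasurableEquiv.toLp 2 (Fin d → ℝ)).symm)
    (MeasurableEquiv.measurableEmbedding _)]
  have : ∀ w : Fin d → ℝ,
      ‖(MeasurableEquiv.toLp 2 (Fin d → ℝ)).symm.symm w‖ ^ 2
        * Real.exp (-b * ‖(MeasurableEquiv.toLp 2 (Fin d → ℝ)).symm.symm w‖ ^ 2)
        = (∑ i, (w i) ^ 2) * ∏ j, Real.exp (-b * (w j) ^ 2) := by
    intro w
    have hn : ‖(MeasurableEquiv.toLp 2 (Fin d → ℝ)).symm.symm w‖ ^ 2 = ∑ i, (w i) ^ 2 := by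
      rw [PiLp.norm_sq_eq_of_L2]
      simp
    rw [hn, ← Real.exp_sum]
    congr 2
    simp [Finset.mul_sum]
  have heq : ((fun y : EuclideanSpace ℝ (Fin d) => ‖y‖ ^ 2 * Real.exp (-b * ‖y‖ ^ 2))
      ∘ (MeasurableEquiv.toLp 2 (Fin d → ℝ)).symm.symm)
      = fun w : Fin d → ℝ => (∑ i, (w i) ^ 2) * ∏ j, Real.exp (-b * (w j) ^ 2) :=
    funext fun w => this w
  rw [heq]
  exact pi_moment_integrable d hb

lemma density_moment (d : ℕ) {σ : ℝ} (hσ : 0 < σ) (x : EuclideanSpace ℝ (Fin d)) :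
    Integrable (fun y : EuclideanSpace ℝ (Fin d) =>
      ‖y - x‖ ^ 2 * ((2 * π * σ ^ 2) ^ (-(d : ℝ) / 2) *
        Real.exp (-‖y - x‖ ^ 2 / (2 * σ ^ 2))))
    ∧ (∫ y : EuclideanSpace ℝ (Fin d),
      ‖y - x‖ ^ 2 * ((2 * π * σ ^ 2) ^ (-(d : ℝ) / 2) *
        Real.exp (-‖y - x‖ ^ 2 / (2 * σ ^ 2)))) = d * σ ^ 2 := by
  have hσ2 : (0:ℝ) < σ ^ 2 := by positivity
  set b : ℝ := (2 * σ ^ 2)⁻¹ with hbdef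
  have hb : 0 < b := by positivity
  have hK : (0:ℝ) < 2 * π * σ ^ 2 := by positivity
  set K : ℝ := (2 * π * σ ^ 2) ^ (-(d : ℝ) / 2) with hKdef
  have hexp : ∀ v : EuclideanSpace ℝ (Fin d),
      -‖v‖ ^ 2 / (2 * σ ^ 2) = -b * ‖v‖ ^ 2 := by
    intro v; rw [hbdef]; field_simp
  have hfun : (fun y : EuclideanSpace ℝ (Fin d) =>
      ‖y - x‖ ^ 2 * (K * Real.exp (-‖y - x‖ ^ 2 / (2 * σ ^ 2))))
      = fun y => K * (‖y - x‖ ^ 2 * Real.exp (-b * ‖y - x‖ ^ 2)) := by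
    funext y; rw [hexp]; ring
  have hint0 := eucl_moment_integrable d hb
  have hint : Integrable (fun y : EuclideanSpace ℝ (Fin d) =>
      K * (‖y - x‖ ^ 2 * Real.exp (-b * ‖y - x‖ ^ 2))) :=
    ((hint0.comp_sub_right x)).const_mul K
  constructor
  · rw [hfun]; exact hint
  · rw [hfun, integral_const_mul]
    have : (∫ y : EuclideanSpace ℝ (Fin d), ‖y - x‖ ^ 2 * Real.exp (-b * ‖y - x‖ ^ 2))
        = ∫ y : EuclideanSpace ℝ (Fin d), ‖y‖ ^ 2 * Real.exp (-b * ‖y‖ ^ 2) :=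
      integral_sub_right_eq_self (fun y : EuclideanSpace ℝ (Fin d) =>
        ‖y‖ ^ 2 * Real.exp (-b * ‖y‖ ^ 2)) x
    rw [this, eucl_moment d hb]
    -- K * (d * (√(π/b)^d / (2b))) = d σ²
    have hπb : π / b = 2 * π * σ ^ 2 := by rw [hbdef]; field_simp
    have h2b : 2 * b = (σ ^ 2)⁻¹ := by rw [hbdef]; field_simp
    rw [hπb, h2b]
    have hsqrt : Real.sqrt (2 * π * σ ^ 2) ^ d = (2 * π * σ ^ 2) ^ ((d : ℝ) / 2) := by
      rw [Real.sqrt_eq_rpow, ← Real.rpow_natCast ((2 * π * σ ^ 2) ^ ((1:ℝ)/2)) d,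
        ← Real.rpow_mul hK.le]
      ring_nf
    rw [hsqrt, hKdef]
    rw [div_eq_mul_inv ((2 * π * σ ^ 2) ^ ((d:ℝ) / 2)) ((σ ^ 2)⁻¹), inv_inv]
    have hcc : (2 * π * σ ^ 2) ^ (-(d:ℝ) / 2) * (2 * π * σ ^ 2) ^ ((d:ℝ) / 2) = 1 := by
      rw [← Real.rpow_add hK, neg_div, neg_add_cancel, Real.rpow_zero]
    linear_combination (d : ℝ) * σ ^ 2 * hcc

/-- Combining the Lipschitz probability bound with the Gaussian
MSE/entropy identity. Under the hypotheses of Statement 0, if `X' = f⁻¹ ∘ Z'` is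
Gaussian with mean `x = f⁻¹ z` and covariance `σ²·I_d` (encoded by its density),
then for every `ε ≥ 0`,
`(ε²/L²)(1 − ℙ(Z' ∈ B^ε_z)) ≤ (d/(2πe))·exp((2/d)·H_Σ)`, and the right-hand side
equals `d·σ²`, where `H_Σ = (d/2)(1 + log(2π)) + (1/2)·log(det(σ²·I_d))`. -/
theorem stmt9 {d : ℕ} (hd : 0 < d) {Ω : Type*} [MeasurableSpace Ω] (μ : Measure Ω)
    [IsProbabilityMeasure μ]
    (A : Set (EuclideanSpace ℝ (Fin d)))
    (f : EuclideanSpace ℝ (Fin d) → EuclideanSpace ℝ (Fin d))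
    (hf : Function.Bijective f) (L : ℝ) (hL : 0 < L)
    (hlip : ∀ x₁ x₂ : EuclideanSpace ℝ (Fin d),
      f x₁ ∈ A → f x₂ ∈ A → ‖f x₁ - f x₂‖ ≤ L * ‖x₁ - x₂‖)
    (Z' : Ω → EuclideanSpace ℝ (Fin d)) (hZmeas : Measurable Z')
    (hZA : ∀ᵐ ω ∂μ, Z' ω ∈ A)
    (hZint : Integrable Z' μ)
    (z : EuclideanSpace ℝ (Fin d)) (hz : z = ∫ ω, Z' ω ∂μ) (hzA : z ∈ A)
    (X' : Ω → EuclideanSpace ℝ (Fin d)) (hX' : ∀ ω, f (X' ω) = Z' ω)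
    (hXmeas : Measurable X')
    (x : EuclideanSpace ℝ (Fin d)) (hx : f x = z)
    (σ : ℝ) (hσ : 0 < σ)
    (hgauss : Measure.map X' μ =
      volume.withDensity (fun y => ENNReal.ofReal
        ((2 * Real.pi * σ ^ 2) ^ (-(d : ℝ) / 2) *
          Real.exp (-‖y - x‖ ^ 2 / (2 * σ ^ 2)))))
    (ε : ℝ) (hε : 0 ≤ ε) :
    (ε ^ 2 / L ^ 2) * (1 - (μ {ω | Z' ω ∈ A ∧ ‖Z' ω - z‖ < ε}).toReal) ≤
        ((d : ℝ) / (2 * Real.pi * Real.exp 1)) *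
          Real.exp ((2 / (d : ℝ)) *
            (((d : ℝ) / 2) * (1 + Real.log (2 * Real.pi)) +
              (1 / 2) * Real.log ((σ ^ 2 • (1 : Matrix (Fin d) (Fin d) ℝ)).det))) ∧
      ((d : ℝ) / (2 * Real.pi * Real.exp 1)) *
          Real.exp ((2 / (d : ℝ)) *
            (((d : ℝ) / 2) * (1 + Real.log (2 * Real.pi)) +
              (1 / 2) * Real.log ((σ ^ 2 • (1 : Matrix (Fin d) (Fin d) ℝ)).det))) =
        (d : ℝ) * σ ^ 2 := by
  have hd' : (0:ℝ) < d := Nat.cast_pos.mpr hd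
  have hσ2 : (0:ℝ) < σ ^ 2 := by positivity
  -- the RHS identity
  have hdet : ((σ ^ 2 • (1 : Matrix (Fin d) (Fin d) ℝ)).det) = (σ ^ 2) ^ d := by
    rw [Matrix.det_smul, Matrix.det_one, mul_one, Fintype.card_fin]
  have hrhs : ((d : ℝ) / (2 * Real.pi * Real.exp 1)) *
      Real.exp ((2 / (d : ℝ)) *
        (((d : ℝ) / 2) * (1 + Real.log (2 * Real.pi)) +
          (1 / 2) * Real.log ((σ ^ 2 • (1 : Matrix (Fin d) (Fin d) ℝ)).det))) =
      (d : ℝ) * σ ^ 2 := by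
    rw [hdet, Real.log_pow]
    have harg : (2 / (d : ℝ)) * (((d : ℝ) / 2) * (1 + Real.log (2 * Real.pi)) +
        (1 / 2) * ((d : ℕ) * Real.log (σ ^ 2))) =
        1 + Real.log (2 * Real.pi) + Real.log (σ ^ 2) := by
      field_simp
    rw [harg, Real.exp_add, Real.exp_add, Real.exp_log (by positivity),
      Real.exp_log hσ2]
    have hpos : (0:ℝ) < 2 * Real.pi * Real.exp 1 := by positivity
    field_simp
  refine ⟨?_, hrhs⟩
  rw [hrhs]
  -- bound on the complement probability
  set B : Set Ω := {ω | Z' ω ∈ A ∧ ‖Z' ω - z‖ < ε} with hBdef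
  set S : Set Ω := {ω | ε ≤ L * ‖X' ω - x‖} with hSdef
  have hSmeas : MeasurableSet S := by
    have : Measurable fun ω => L * ‖X' ω - x‖ :=
      (continuous_const.mul ((continuous_id.sub continuous_const).norm)).measurable.comp hXmeas
    exact measurableSet_le measurable_const this
  have hsub : Bᶜ ⊆ S ∪ {ω | Z' ω ∉ A} := by
    intro ω hω
    by_cases hA : Z' ω ∈ A
    · left
      have h1 : ¬ (Z' ω ∈ A ∧ ‖Z' ω - z‖ < ε) := hω
      have h2 : ε ≤ ‖Z' ω - z‖ := by
        by_contra h
        exact h1 ⟨hA, lt_of_not_ge h⟩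
      have h3 : ‖f (X' ω) - f x‖ ≤ L * ‖X' ω - x‖ := by
        apply hlip
        · rw [hX']; exact hA
        · rw [hx]; exact hzA
      rw [hX', hx] at h3
      exact le_trans h2 h3
    · right; exact hA
  have hnull : μ {ω | Z' ω ∉ A} = 0 := ae_iff.mp hZA
  have hBc : μ Bᶜ ≤ μ S := by
    refine le_trans (measure_mono hsub) (le_trans (measure_union_le _ _) ?_)
    rw [hnull, add_zero]
  have hone : (1:ℝ≥0∞) ≤ μ B + μ S := by
    calc (1:ℝ≥0∞) = μ Set.univ := (measure_univ).symm
    _ = μ (B ∪ Bᶜ) := by rw [Set.union_compl_self]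
    _ ≤ μ B + μ Bᶜ := measure_union_le _ _
    _ ≤ μ B + μ S := add_le_add le_rfl hBc
  have h1 : 1 - (μ B).toReal ≤ (μ S).toReal := by
    have hfin : μ B ≠ ⊤ := (measure_lt_top μ B).ne
    have hfin' : μ S ≠ ⊤ := (measure_lt_top μ S).ne
    have := ENNReal.toReal_mono (by finiteness) hone
    rw [ENNReal.toReal_one, ENNReal.toReal_add hfin hfin'] at this
    linarith
  -- move to the image measure
  set ν : Measure (EuclideanSpace ℝ (Fin d)) := Measure.map X' μ with hνdef
  haveI : IsProbabilityMeasure ν := Measure.isProbabilityMeasure_map hXmeas.aemeasurable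
  set T : Set (EuclideanSpace ℝ (Fin d)) := {y | ε ≤ L * ‖y - x‖} with hTdef
  have hTmeas : MeasurableSet T := by
    have : Measurable fun y : EuclideanSpace ℝ (Fin d) => L * ‖y - x‖ :=
      (continuous_const.mul ((continuous_id.sub continuous_const).norm)).measurable
    exact measurableSet_le measurable_const this
  have hST : μ S = ν T := by
    rw [hνdef, Measure.map_apply hXmeas hTmeas]
    rfl
  -- Chebyshev
  have hg : Measurable fun y : EuclideanSpace ℝ (Fin d) =>
      ENNReal.ofReal (‖y - x‖ ^ 2) :=
    (((continuous_id.sub continuous_const).norm.pow 2).measurable).ennreal_ofReal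
  have hcheb : ENNReal.ofReal ((ε / L) ^ 2) * ν T ≤
      ∫⁻ y, ENNReal.ofReal (‖y - x‖ ^ 2) ∂ν := by
    have hsub2 : T ⊆ {y | ENNReal.ofReal ((ε / L) ^ 2) ≤ ENNReal.ofReal (‖y - x‖ ^ 2)} := by
      intro y hy
      have h1 : ε / L ≤ ‖y - x‖ := (div_le_iff₀' hL).mpr hy
      have h2 : (ε / L) ^ 2 ≤ ‖y - x‖ ^ 2 :=
        pow_le_pow_left₀ (by positivity) h1 2
      exact ENNReal.ofReal_le_ofReal h2
    calc ENNReal.ofReal ((ε / L) ^ 2) * ν T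
        ≤ ENNReal.ofReal ((ε / L) ^ 2) *
          ν {y | ENNReal.ofReal ((ε / L) ^ 2) ≤ ENNReal.ofReal (‖y - x‖ ^ 2)} := by
          exact mul_le_mul_right (measure_mono hsub2) _
      _ ≤ ∫⁻ y, ENNReal.ofReal (‖y - x‖ ^ 2) ∂ν :=
          mul_meas_ge_le_lintegral₀ hg.aemeasurable _
  -- compute the lintegral
  set p : EuclideanSpace ℝ (Fin d) → ℝ := fun y =>
    (2 * Real.pi * σ ^ 2) ^ (-(d : ℝ) / 2) * Real.exp (-‖y - x‖ ^ 2 / (2 * σ ^ 2)) with hpdef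
  have hppos : ∀ y, 0 ≤ p y := by
    intro y
    have : (0:ℝ) < 2 * Real.pi * σ ^ 2 := by positivity
    positivity
  have hpmeas : Measurable fun y => ENNReal.ofReal (p y) := by
    apply Measurable.ennreal_ofReal
    apply Continuous.measurable
    exact continuous_const.mul
      (((((continuous_id.sub continuous_const).norm.pow 2).neg).div_const _).rexp)
  have hmoment := density_moment d hσ x
  have hlin : ∫⁻ y, ENNReal.ofReal (‖y - x‖ ^ 2) ∂ν = ENNReal.ofReal (d * σ ^ 2) := by
    rw [hgauss]
    rw [lintegral_withDensity_eq_lintegral_mul _ hpmeas hg]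
    have : ∀ y : EuclideanSpace ℝ (Fin d),
        (ENNReal.ofReal (p y) * ENNReal.ofReal (‖y - x‖ ^ 2))
          = ENNReal.ofReal (‖y - x‖ ^ 2 * p y) := by
      intro y
      rw [← ENNReal.ofReal_mul (hppos y), mul_comm]
    simp only [Pi.mul_apply]
    rw [show (fun y => ENNReal.ofReal (p y) * ENNReal.ofReal (‖y - x‖ ^ 2))
        = fun y => ENNReal.ofReal (‖y - x‖ ^ 2 * p y) from funext this]
    rw [← ofReal_integral_eq_lintegral_ofReal hmoment.1
      (Filter.Eventually.of_forall fun y => by positivity)]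
    rw [hmoment.2]
  rw [hlin] at hcheb
  -- convert to real
  have hνT : ν T ≠ ⊤ := (measure_lt_top ν T).ne
  have hchebR : (ε / L) ^ 2 * (ν T).toReal ≤ d * σ ^ 2 := by
    have := ENNReal.toReal_mono (by finiteness) hcheb
    rw [ENNReal.toReal_mul, ENNReal.toReal_ofReal (by positivity),
      ENNReal.toReal_ofReal (by positivity)] at this
    exact this
  have hfinal : ε ^ 2 / L ^ 2 * (1 - (μ B).toReal) ≤ (ε / L) ^ 2 * (ν T).toReal := by
    rw [div_pow] at hchebR ⊢
    have h2 : (1 - (μ B).toReal) ≤ (ν T).toReal := by rw [← hST]; exact h1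
    exact mul_le_mul_of_nonneg_left h2 (by positivity)
  exact le_trans hfinal hchebR
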